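/- The edge set E^B of the minimum max-linear DAG 𝒟^B satisfies E^B = {(k,i) ∈ V×V : k ≠ i and b_{ki} > max_{l ∈ V, l ≠ i, l ≠ k} b_{kl} b_{li} / b_{ll}}; in particular, 𝒟^B is identifiable from the max-linear coefficient matrix B alone, without knowledge of 𝒟. -/

import Mathlib

open scoped NNReal ENNReal Classical

namespace MaxLinearDAG

variable {d : ℕ}

/-- `p` is a directed path (with at least one edge) from `j` to `i` in the edge relation `E`. -/
def PathFrom (E : Fin d → Fin d → Prop) (j i : Fin d) (p : List (Fin d)) : Prop :=
  2 ≤ p.length ∧ p.head? = some j ∧ p.getLast? = some i ∧ List.Chain' E p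

/-- The directed graph given by `E` is acyclic: no directed path from a node to itself. -/
def Acyclic (E : Fin d → Fin d → Prop) : Prop :=
  ∀ i, ¬ ∃ p, PathFrom E i i p

/-- `j` is an ancestor of `i`: there is a path from `j` to `i`. -/
def anc (E : Fin d → Fin d → Prop) (j i : Fin d) : Prop :=
  ∃ p, PathFrom E j i p

/-- The weight of a path `p` starting at `j`: `c j j` times the product of the
edge weights along `p`. -/
noncomputable def pathWeight (c : Fin d → Fin d → ℝ≥0) (j : Fin d) (p : List (Fin d)) : ℝ≥0 :=
  c j j * ((p.zip p.tail).map fun q => c q.1 q.2).prod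

/-- `b` is the max-linear coefficient matrix of the recursive ML model on `(E, c)`:
for `j ∈ an(i)`, `b j i` is the (attained) maximum of the path weights over all paths
from `j` to `i`; `b i i = c i i`; and `b j i = 0` for `j ∉ An(i)`. -/
def IsMLMatrix (E : Fin d → Fin d → Prop) (c b : Fin d → Fin d → ℝ≥0) : Prop :=
  (∀ i, b i i = c i i) ∧
  (∀ j i, j ≠ i → ¬ anc E j i → b j i = 0) ∧
  (∀ j i p, PathFrom E j i p → pathWeight c j p ≤ b j i) ∧
  (∀ j i, anc E j i → ∃ p, PathFrom E j i p ∧ pathWeight c j p = b j i)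

/-- `x` is the vector of recursive max-linear values on `(E, c)` for noise `z`:
`x i = max (max_{k ∈ pa(i)} c k i * x k) (c i i * z i)`, empty max being `0`. -/
def IsRecML (E : Fin d → Fin d → Prop) (c : Fin d → Fin d → ℝ≥0) (z x : Fin d → ℝ≥0) : Prop :=
  ∀ i, x i = (Finset.univ.sup fun k => if E k i then c k i * x k else 0) ⊔ c i i * z i

/-- Max-times matrix product `F ⊙ G`. -/
noncomputable def mprod (F G : Fin d → Fin d → ℝ≥0) : Fin d → Fin d → ℝ≥0 :=
  fun i j => Finset.univ.sup fun k => F i k * G k j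

/-- Max-times matrix power, `mpow A 0` being the identity matrix. -/
noncomputable def mpow (A : Fin d → Fin d → ℝ≥0) : ℕ → Fin d → Fin d → ℝ≥0
  | 0 => fun i j => if i = j then 1 else 0
  | n + 1 => mprod (mpow A n) A

/-- `p` is a max-weighted path from `j` to `i`. -/
def MaxWeighted (E : Fin d → Fin d → Prop) (c b : Fin d → Fin d → ℝ≥0)
    (j i : Fin d) (p : List (Fin d)) : Prop :=
  PathFrom E j i p ∧ pathWeight c j p = b j i

/-- The lowest max-weighted ancestors of `i` in `U`: nodes `j ∈ An(i) ∩ U` such that no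
max-weighted path from `j` to `i` passes through a node of `U \ {j}`. -/
def AnLow (E : Fin d → Fin d → Prop) (c b : Fin d → Fin d → ℝ≥0)
    (U : Set (Fin d)) (i : Fin d) : Set (Fin d) :=
  {j | (anc E j i ∨ j = i) ∧ j ∈ U ∧
    ∀ p, MaxWeighted E c b j i p → ¬ ∃ u ∈ U \ {j}, u ∈ p}

/-- The highest max-weighted descendants of `i` in `U`: nodes `l ∈ De(i) ∩ U` such that no
max-weighted path from `i` to `l` passes through a node of `U \ {l}`. -/
def DeHigh (E : Fin d → Fin d → Prop) (c b : Fin d → Fin d → ℝ≥0)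
    (U : Set (Fin d)) (i : Fin d) : Set (Fin d) :=
  {l | (anc E i l ∨ l = i) ∧ l ∈ U ∧
    ∀ p, MaxWeighted E c b i l p → ¬ ∃ u ∈ U \ {l}, u ∈ p}


noncomputable def eprod (c : Fin d → Fin d → ℝ≥0) (p : List (Fin d)) : ℝ≥0 :=
  ((p.zip p.tail).map fun q => c q.1 q.2).prod

lemma pathWeight_eq (c : Fin d → Fin d → ℝ≥0) (j : Fin d) (p : List (Fin d)) :
    pathWeight c j p = c j j * eprod c p := rfl

lemma eprod_nil (c : Fin d → Fin d → ℝ≥0) : eprod c ([] : List (Fin d)) = 1 := rfl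
lemma eprod_single (c : Fin d → Fin d → ℝ≥0) (a : Fin d) : eprod c [a] = 1 := rfl
lemma eprod_cons_cons (c : Fin d → Fin d → ℝ≥0) (a b2 : Fin d) (t : List (Fin d)) :
    eprod c (a :: b2 :: t) = c a b2 * eprod c (b2 :: t) := by
  simp [eprod]

lemma eprod_pos {E : Fin d → Fin d → Prop} (c : Fin d → Fin d → ℝ≥0)
    (hce : ∀ a b2, E a b2 → 0 < c a b2) :
    ∀ p : List (Fin d), List.Chain' E p → 0 < eprod c p
  | [], _ => by simp [eprod_nil]
  | [a], _ => by simp [eprod_single]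
  | a :: b2 :: t, h => by
    rw [eprod_cons_cons]
    have h1 := List.isChain_cons_cons.mp h
    exact mul_pos (hce a b2 h1.1) (eprod_pos c hce (b2 :: t) h1.2)

lemma eprod_append (c : Fin d → Fin d → ℝ≥0) :
    ∀ (p : List (Fin d)) (l m : Fin d), p.getLast? = some l →
      eprod c (p ++ [m]) = eprod c p * c l m
  | [], l, m, h => by simp at h
  | [a], l, m, h => by
    simp only [List.getLast?_singleton, Option.some.injEq] at h
    subst h
    simp [eprod_single, eprod_cons_cons, eprod_nil]
  | a :: b2 :: t, l, m, h => by
    have h' : (b2 :: t).getLast? = some l := by simpa using h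
    show eprod c (a :: b2 :: (t ++ [m])) = _
    rw [eprod_cons_cons, show b2 :: (t ++ [m]) = (b2 :: t) ++ [m] from rfl,
      eprod_append c (b2 :: t) l m h', eprod_cons_cons, mul_assoc]

lemma pathFrom_pair {E : Fin d → Fin d → Prop} {j i : Fin d} (h : E j i) :
    PathFrom E j i [j, i] :=
  ⟨by simp, by simp, by simp, List.isChain_pair.mpr h⟩

lemma pathFrom_append {E : Fin d → Fin d → Prop} {j l m : Fin d} {p : List (Fin d)}
    (hp : PathFrom E j l p) (h : E l m) : PathFrom E j m (p ++ [m]) := by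
  obtain ⟨hlen, hhead, hlast, hchain⟩ := hp
  refine ⟨by simp; omega, ?_, ?_, ?_⟩
  · rcases p with _ | ⟨a, t⟩
    · simp at hlen
    · simpa using hhead
  · simp
  · refine List.IsChain.append hchain (by simp) ?_
    intro x hx y hy
    simp at hy
    rw [hlast] at hx
    simp at hx
    subst hx; subst hy; exact h

lemma div_aux (a e s : ℝ≥0) (hs : s ≠ 0) : a * (s * e) / s = a * e := by
  rw [show a * (s * e) = a * e * s by ring, mul_div_cancel_right₀ _ hs]

lemma div_mono {a b2 : ℝ≥0} (s : ℝ≥0) (h : a ≤ b2) : a / s ≤ b2 / s := by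
  rw [div_eq_mul_inv, div_eq_mul_inv]; exact mul_le_mul_left h _

/-- The edge set `E^B` of the minimum max-linear DAG `𝒟^B` satisfies
`E^B = {(k,i) : k ≠ i ∧ b k i > max_{l ≠ i, l ≠ k} b k l * b l i / b l l}`; in particular
`𝒟^B` is identifiable from `B` alone, without knowledge of `𝒟`. -/
theorem stmt10 {d : ℕ} (hd : 1 ≤ d) (E : Fin d → Fin d → Prop) (hE : Acyclic E)
    (c : Fin d → Fin d → ℝ≥0) (hcd : ∀ i, 0 < c i i) (hce : ∀ k i, E k i → 0 < c k i)
    (b : Fin d → Fin d → ℝ≥0) (hb : IsMLMatrix E c b) :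
    let edgeB : Fin d → Fin d → Prop := fun k i => E k i ∧
      (Finset.univ.sup fun l =>
        if anc E k l ∧ E l i then b k l * b l i / b l l else 0) < b k i
    ∀ k i : Fin d, edgeB k i ↔ (k ≠ i ∧
      (Finset.univ.sup fun l =>
        if l ≠ i ∧ l ≠ k then b k l * b l i / b l l else 0) < b k i) := by
  obtain ⟨hbd, hbz, hble, hbat⟩ := hb
  intro edgeB k i
  have hancne : ∀ j l : Fin d, anc E j l → j ≠ l := by
    rintro j l ⟨p, hp⟩ rfl; exact hE j ⟨p, hp⟩
  have hEanc : ∀ j l : Fin d, E j l → anc E j l := fun j l h => ⟨_, pathFrom_pair h⟩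
  have hbpos : ∀ j l : Fin d, anc E j l → 0 < b j l := by
    intro j l h
    obtain ⟨p, hp, hw⟩ := hbat j l h
    rw [← hw, pathWeight_eq]
    exact mul_pos (hcd j) (eprod_pos c hce p hp.2.2.2)
  set sup1 : ℝ≥0 := Finset.univ.sup fun l =>
    if anc E k l ∧ E l i then b k l * b l i / b l l else 0 with hsup1def
  set sup2 : ℝ≥0 := Finset.univ.sup fun l =>
    if l ≠ i ∧ l ≠ k then b k l * b l i / b l l else 0 with hsup2def
  constructor
  · rintro ⟨hki, hlt⟩
    have hanci : anc E k i := hEanc k i hki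
    have hkne : k ≠ i := hancne k i hanci
    have hpos : 0 < b k i := hbpos k i hanci
    -- Key lemma: any path from an ancestor l of k to i gives a bound by sup1.
    have key : ∀ n (q : List (Fin d)) (l : Fin d), q.length ≤ n → anc E k l →
        PathFrom E l i q → b k l * eprod c q ≤ sup1 := by
      intro n
      induction n with
      | zero => intro q l hq hanc hp; have := hp.1; omega
      | succ n ih =>
        intro q l hq hanc hp
        obtain ⟨hlen, hhead, hlast, hchain⟩ := hp
        rcases q with _ | ⟨a, _ | ⟨b2, t⟩⟩
        · simp at hlen
        · simp at hlen
        · have ha : a = l := by simpa using hhead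
          subst ha
          have hEab := (List.isChain_cons_cons.mp hchain).1
          rcases t with _ | ⟨b3, t'⟩
          · -- q = [a, b2] with b2 = i : base case, E a i
            have hb2 : b2 = i := by simpa using hlast
            subst b2
            rw [eprod_cons_cons, eprod_single, mul_one]
            have hterm : b k a * c a i ≤ b k a * b a i / b a a := by
              have h1 : c a a * c a i ≤ b a i := by
                have := hble a i [a, i] (pathFrom_pair hEab)
                rw [pathWeight_eq, eprod_cons_cons, eprod_single, mul_one] at this
                exact this
              calc b k a * c a i = b k a * (c a a * c a i) / c a a := by
                    rw [div_aux _ _ _ (hcd a).ne']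
                _ ≤ b k a * b a i / c a a := by
                    exact div_mono _ (mul_le_mul_right h1 _)
                _ = b k a * b a i / b a a := by rw [hbd a]
            have hmem : (if anc E k a ∧ E a i then b k a * b a i / b a a else 0) ≤ sup1 :=
              Finset.le_sup (f := fun l =>
                if anc E k l ∧ E l i then b k l * b l i / b l l else 0) (Finset.mem_univ a)
            rw [if_pos ⟨hanc, hEab⟩] at hmem
            exact hterm.trans hmem
          · -- q = a :: b2 :: b3 :: t'
            have hq2 : PathFrom E b2 i (b2 :: b3 :: t') := by
              refine ⟨by simp, by simp, by simpa using hlast,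
                (List.isChain_cons_cons.mp hchain).2⟩
            obtain ⟨p0, hp0, hw0⟩ := hbat k a hanc
            have hanc2 : anc E k b2 := ⟨p0 ++ [b2], pathFrom_append hp0 hEab⟩
            have hmul : b k a * c a b2 ≤ b k b2 := by
              have := hble k b2 (p0 ++ [b2]) (pathFrom_append hp0 hEab)
              rw [pathWeight_eq, eprod_append c p0 a b2 hp0.2.2.1, ← mul_assoc,
                ← pathWeight_eq, hw0] at this
              exact this
            rw [eprod_cons_cons, ← mul_assoc]
            calc b k a * c a b2 * eprod c (b2 :: b3 :: t')
                ≤ b k b2 * eprod c (b2 :: b3 :: t') := mul_le_mul_left hmul _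
              _ ≤ sup1 := ih (b2 :: b3 :: t') b2 (by simp at hq ⊢; omega) hanc2 hq2
    refine ⟨hkne, ?_⟩
    rw [Finset.sup_lt_iff (show (⊥ : ℝ≥0) < b k i from hpos)]
    intro l _
    by_cases hl : l ≠ i ∧ l ≠ k
    · rw [if_pos hl]
      by_cases hancl : anc E k l
      · by_cases hancli : anc E l i
        · obtain ⟨q, hq, hwq⟩ := hbat l i hancli
          have hle : b k l * b l i / b l l ≤ sup1 := by
            rw [← hwq, pathWeight_eq, hbd l, div_aux _ _ _ (hcd l).ne']
            exact key q.length q l le_rfl hancl hq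
          exact lt_of_le_of_lt hle hlt
        · rw [hbz l i hl.1 hancli, mul_zero, zero_div]; exact hpos
      · rw [hbz k l (Ne.symm hl.2) hancl, zero_mul, zero_div]; exact hpos
    · rw [if_neg hl]; exact hpos
  · rintro ⟨hkne, hlt⟩
    have hpos : 0 < b k i := lt_of_le_of_lt zero_le hlt
    have hanci : anc E k i := by
      by_contra h
      rw [hbz k i hkne h] at hpos
      exact lt_irrefl _ hpos
    obtain ⟨p, hp, hwp⟩ := hbat k i hanci
    obtain ⟨hlen, hhead, hlast, hchain⟩ := hp
    rcases p with _ | ⟨a, _ | ⟨l2, r⟩⟩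
    · simp at hlen
    · simp at hlen
    · have ha : a = k := by simpa using hhead
      rw [ha] at hlen hhead hlast hchain hwp
      have hEkl2 := (List.isChain_cons_cons.mp hchain).1
      have hki : E k i := by
        rcases r with _ | ⟨b3, r'⟩
        · have : l2 = i := by simpa using hlast
          rwa [this] at hEkl2
        · -- intermediate node l2 : derive contradiction with hlt
          exfalso
          have hq2 : PathFrom E l2 i (l2 :: b3 :: r') := by
            refine ⟨by simp, by simp, by simpa using hlast,
              (List.isChain_cons_cons.mp hchain).2⟩
          have hl2i : l2 ≠ i := hancne l2 i ⟨_, hq2⟩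
          have hl2k : l2 ≠ k := by
            intro h
            rw [h] at hEkl2
            exact hE k ⟨[k, k], pathFrom_pair hEkl2⟩
          have h1 : c k k * c k l2 ≤ b k l2 := by
            have := hble k l2 [k, l2] (pathFrom_pair hEkl2)
            rw [pathWeight_eq, eprod_cons_cons, eprod_single, mul_one] at this
            exact this
          have h2 : c l2 l2 * eprod c (l2 :: b3 :: r') ≤ b l2 i := by
            have := hble l2 i (l2 :: b3 :: r') hq2
            rw [pathWeight_eq] at this
            exact this
          have hbig : b k i ≤ b k l2 * b l2 i / b l2 l2 := by
            rw [← hwp, pathWeight_eq, eprod_cons_cons, hbd l2]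
            calc c k k * (c k l2 * eprod c (l2 :: b3 :: r'))
                = (c k k * c k l2) * (c l2 l2 * eprod c (l2 :: b3 :: r')) / c l2 l2 := by
                  rw [div_aux _ _ _ (hcd l2).ne', mul_assoc]
              _ ≤ b k l2 * b l2 i / c l2 l2 :=
                  div_mono _ (mul_le_mul h1 h2 zero_le zero_le)
          have hsup : b k l2 * b l2 i / b l2 l2 ≤ sup2 := by
            have hmem : (if l2 ≠ i ∧ l2 ≠ k then b k l2 * b l2 i / b l2 l2 else 0) ≤ sup2 :=
              Finset.le_sup (f := fun l =>
                if l ≠ i ∧ l ≠ k then b k l * b l i / b l l else 0) (Finset.mem_univ l2)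
            rwa [if_pos ⟨hl2i, hl2k⟩] at hmem
          exact absurd (lt_of_le_of_lt (hbig.trans hsup) hlt) (lt_irrefl _)
      refine ⟨hki, ?_⟩
      rw [Finset.sup_lt_iff (show (⊥ : ℝ≥0) < b k i from hpos)]
      intro l _
      by_cases hl : anc E k l ∧ E l i
      · rw [if_pos hl]
        have hli : l ≠ i := by
          rintro rfl
          exact hE l ⟨[l, l], pathFrom_pair hl.2⟩
        have hlk : l ≠ k := Ne.symm (hancne k l hl.1)
        have hmem : (if l ≠ i ∧ l ≠ k then b k l * b l i / b l l else 0) ≤ sup2 :=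
          Finset.le_sup (f := fun l' =>
            if l' ≠ i ∧ l' ≠ k then b k l' * b l' i / b l' l' else 0) (Finset.mem_univ l)
        rw [if_pos ⟨hli, hlk⟩] at hmem
        exact lt_of_le_of_lt hmem hlt
      · rw [if_neg hl]; exact hpos
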